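/- Let γ = 1, u₀ > 0, u₁ ≥ ... ≥ uₙ ≥ u_{n+1} := 0, Φ(S) = max_{j∈S} u_j/(u_j+u₀) (with Φ(∅)=0), and X = {(w,x) ∈ ℝ × {0,1}^n : w ≤ Φ(S^x)}. Then conv(X) = { (w,x) ∈ ℝ × [0,1]^n : w ≤ u_{ℓ+1}/(u_{ℓ+1}+u₀) + ∑_{j=1}^{n} ( u_j/(u_j+u₀) − u_{ℓ+1}/(u_{ℓ+1}+u₀) )⁺ x_j for all ℓ ∈ [n] }. -/

import Mathlib

open Finset

/-- The probability function `Φ(S) = max { u(S')/(u(S')+u₀) : S' ⊆ S, |S'| ≤ γ }`. -/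
noncomputable def Phi (γ : ℕ) (u : ℕ → ℝ) (u0 : ℝ) (S : Finset ℕ) : ℝ :=
  ((S.powerset.filter fun S' => S'.card ≤ γ).image
      fun S' => (∑ j ∈ S', u j) / ((∑ j ∈ S', u j) + u0)).max'
    (Finset.Nonempty.image ⟨∅, Finset.mem_filter.mpr ⟨Finset.empty_mem_powerset S, by simp⟩⟩ _)

open scoped Classical


namespace S11

variable {n : ℕ}

abbrev Atom (n : ℕ) := ℝ × Finset (Fin n)

/-- weighted sum of `g` over atoms -/
noncomputable def wsum (g : Finset (Fin n) → ℝ) (L : List (Atom n)) : ℝ :=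
  (L.map fun p => p.1 * g p.2).sum

@[simp] lemma wsum_nil (g : Finset (Fin n) → ℝ) : wsum g ([] : List (Atom n)) = 0 := rfl

@[simp] lemma wsum_cons (g : Finset (Fin n) → ℝ) (p : Atom n) (L : List (Atom n)) :
    wsum g (p :: L) = p.1 * g p.2 + wsum g L := rfl

lemma wsum_append (g : Finset (Fin n) → ℝ) (L M : List (Atom n)) :
    wsum g (L ++ M) = wsum g L + wsum g M := by
  simp [wsum]

lemma wsum_congr {g h : Finset (Fin n) → ℝ} {L : List (Atom n)}
    (H : ∀ p ∈ L, g p.2 = h p.2) : wsum g L = wsum h L := by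
  induction L with
  | nil => rfl
  | cons p L ih =>
    simp only [wsum_cons, H p (by simp), ih (fun q hq => H q (by simp [hq]))]

lemma wsum_le {g h : Finset (Fin n) → ℝ} {L : List (Atom n)}
    (hw : ∀ p ∈ L, 0 ≤ p.1) (H : ∀ p ∈ L, g p.2 ≤ h p.2) : wsum g L ≤ wsum h L := by
  induction L with
  | nil => exact le_refl _
  | cons p L ih =>
    simp only [wsum_cons]
    have := mul_le_mul_of_nonneg_left (H p (by simp)) (hw p (by simp))
    have h2 := ih (fun q hq => hw q (by simp [hq])) (fun q hq => H q (by simp [hq]))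
    linarith

lemma wsum_sum {ι : Type*} (s : Finset ι) (F : ι → Finset (Fin n) → ℝ) (L : List (Atom n)) :
    wsum (fun A => ∑ i ∈ s, F i A) L = ∑ i ∈ s, wsum (F i) L := by
  induction L with
  | nil => simp
  | cons p L ih => simp [wsum_cons, ih, Finset.mul_sum, Finset.sum_add_distrib]

/-- total weight -/
noncomputable def tw (L : List (Atom n)) : ℝ := wsum (fun _ => 1) L

noncomputable def ind (P : Prop) : ℝ := if P then 1 else 0

lemma ind_nonneg (P : Prop) : 0 ≤ ind P := by unfold ind; split <;> norm_num

noncomputable def mss (j : Fin n) (L : List (Atom n)) : ℝ := wsum (fun A => ind (j ∈ A)) L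
noncomputable def nem (L : List (Atom n)) : ℝ := wsum (fun A => ind A.Nonempty) L
noncomputable def cov (K : ℕ) (L : List (Atom n)) : ℝ :=
  wsum (fun A => ind (∃ i ∈ A, (i : ℕ) + 1 ≤ K)) L

/-- split off measure `d` from the head of the list, inserting `k` into the sets of the
marked part; returns (marked, rest). -/
noncomputable def mark (k : Fin n) : ℝ → List (Atom n) → List (Atom n) × List (Atom n)
  | _, [] => ([], [])
  | d, (w, A) :: rest =>
    if d ≤ w then ([(d, insert k A)], (w - d, A) :: rest)
    else
      let q := mark k (d - w) rest
      ((w, insert k A) :: q.1, q.2)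

lemma mark_fst_mem (k : Fin n) (d : ℝ) (L : List (Atom n)) :
    ∀ p ∈ (mark k d L).1, ∃ q ∈ L, p.2 = insert k q.2 := by
  induction L generalizing d with
  | nil => simp [mark]
  | cons a L ih =>
    obtain ⟨w, A⟩ := a
    by_cases h : d ≤ w
    · intro p hp
      simp only [mark, if_pos h, List.mem_singleton] at hp
      exact ⟨(w, A), by simp, by simp [hp]⟩
    · intro p hp
      simp only [mark, if_neg h, List.mem_cons] at hp
      rcases hp with hp | hp
      · exact ⟨(w, A), by simp, by simp [hp]⟩
      · obtain ⟨q, hq, hq2⟩ := ih (d - w) p hp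
        exact ⟨q, by simp [hq], hq2⟩

lemma mark_snd_mem (k : Fin n) (d : ℝ) (L : List (Atom n)) :
    ∀ p ∈ (mark k d L).2, ∃ q ∈ L, p.2 = q.2 := by
  induction L generalizing d with
  | nil => simp [mark]
  | cons a L ih =>
    obtain ⟨w, A⟩ := a
    by_cases h : d ≤ w
    · intro p hp
      simp only [mark, if_pos h, List.mem_cons] at hp
      rcases hp with hp | hp
      · exact ⟨(w, A), by simp, by simp [hp]⟩
      · exact ⟨p, by simp [hp], rfl⟩
    · intro p hp
      simp only [mark, if_neg h] at hp
      obtain ⟨q, hq, hq2⟩ := ih (d - w) p hp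
      exact ⟨q, by simp [hq], hq2⟩

lemma mark_nonneg (k : Fin n) {d : ℝ} {L : List (Atom n)} (h0 : 0 ≤ d)
    (hL : ∀ p ∈ L, 0 ≤ p.1) (hd : d ≤ tw L) :
    (∀ p ∈ (mark k d L).1, 0 ≤ p.1) ∧ (∀ p ∈ (mark k d L).2, 0 ≤ p.1) := by
  induction L generalizing d with
  | nil => simp [mark]
  | cons a L ih =>
    obtain ⟨w, A⟩ := a
    by_cases h : d ≤ w
    · constructor
      · intro p hp; simp only [mark, if_pos h, List.mem_singleton] at hp
        simp [hp, h0]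
      · intro p hp; simp only [mark, if_pos h, List.mem_cons] at hp
        rcases hp with hp | hp
        · simp [hp]; linarith
        · exact hL p (by simp [hp])
    · have hw : 0 ≤ w := hL (w, A) (by simp)
      have h1 : 0 ≤ d - w := by linarith [not_le.mp h]
      have h2 : d - w ≤ tw L := by
        have : tw ((w, A) :: L) = w + tw L := by simp [tw]
        rw [this] at hd; linarith
      obtain ⟨ihm, ihr⟩ := ih h1 (fun q hq => hL q (by simp [hq])) h2
      constructor
      · intro p hp; simp only [mark, if_neg h, List.mem_cons] at hp
        rcases hp with hp | hp
        · simp [hp, hw]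
        · exact ihm p hp
      · intro p hp; simp only [mark, if_neg h] at hp
        exact ihr p hp

lemma mark_tw (k : Fin n) {d : ℝ} {L : List (Atom n)} (h0 : 0 ≤ d) (hd : d ≤ tw L) :
    tw (mark k d L).1 = d ∧ tw (mark k d L).2 = tw L - d := by
  induction L generalizing d with
  | nil =>
    have : tw ([] : List (Atom n)) = 0 := rfl
    rw [this] at hd
    have : d = 0 := le_antisymm hd h0
    simp [mark, this, tw]
  | cons a L ih =>
    obtain ⟨w, A⟩ := a
    by_cases h : d ≤ w
    · constructor <;> simp [mark, h, tw] <;> ring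
    · have h1 : 0 ≤ d - w := by linarith [not_le.mp h]
      have h2 : d - w ≤ tw L := by
        have : tw ((w, A) :: L) = w + tw L := by simp [tw]
        rw [this] at hd; linarith
      obtain ⟨ihm, ihr⟩ := ih h1 h2
      constructor
      · simp only [mark, if_neg h]
        simp [tw] at ihm ⊢
        linarith
      · simp only [mark, if_neg h]
        simp [tw] at ihr ⊢
        rw [ihr]; ring

lemma mark_wsum (k : Fin n) (d : ℝ) (L : List (Atom n)) {g : Finset (Fin n) → ℝ}
    (hg : ∀ A, g (insert k A) = g A) :
    wsum g (mark k d L).1 + wsum g (mark k d L).2 = wsum g L := by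
  induction L generalizing d with
  | nil => simp [mark]
  | cons a L ih =>
    obtain ⟨w, A⟩ := a
    by_cases h : d ≤ w
    · simp [mark, h, hg]; ring
    · simp only [mark, if_neg h]
      simp only [wsum_cons, hg]
      have := ih (d - w)
      linarith


@[simp] lemma wsum_zero (L : List (Atom n)) : wsum (fun _ => 0) L = 0 := by
  simp [wsum]

lemma ind_congr {P Q : Prop} (h : P ↔ Q) : ind P = ind Q := by
  simp only [ind, h]

lemma tw_nonneg {L : List (Atom n)} (hL : ∀ p ∈ L, 0 ≤ p.1) : 0 ≤ tw L := by
  induction L with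
  | nil => exact le_refl _
  | cons p L ih =>
    have h1 := hL p (by simp)
    have h2 := ih (fun q hq => hL q (by simp [hq]))
    simp only [tw, wsum_cons] at *
    linarith

lemma nem_empty {L : List (Atom n)} (hL : ∀ p ∈ L, p.2 = ∅) : nem L = 0 := by
  rw [nem, wsum_congr (h := fun _ => 0) (fun p hp => by simp [hL p hp, ind])]
  simp

lemma nem_full {L : List (Atom n)} (hL : ∀ p ∈ L, p.2.Nonempty) : nem L = tw L := by
  exact wsum_congr (fun p hp => by simp [ind, hL p hp])

lemma mark_fst_nonempty (k : Fin n) (d : ℝ) (L : List (Atom n)) :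
    ∀ p ∈ (mark k d L).1, p.2.Nonempty := by
  intro p hp
  obtain ⟨q, _, hq2⟩ := mark_fst_mem k d L p hp
  rw [hq2]; exact Finset.insert_nonempty _ _

lemma mark_split (k : Fin n) {d : ℝ} {U C : List (Atom n)}
    (hU : ∀ p ∈ U, p.2 = ∅) (hC : ∀ p ∈ C, p.2.Nonempty)
    (hw : ∀ p ∈ U ++ C, 0 ≤ p.1) (h0 : 0 ≤ d) (hd : d ≤ tw (U ++ C)) :
    nem (mark k d (U ++ C)).2 = (tw (U ++ C) - d) - max (tw U - d) 0 ∧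
    ∃ U' C', (mark k d (U ++ C)).2 = U' ++ C' ∧ (∀ p ∈ U', p.2 = ∅) ∧
      (∀ p ∈ C', p.2.Nonempty) := by
  induction U generalizing d with
  | nil =>
    simp only [List.nil_append] at *
    have hR : ∀ p ∈ (mark k d C).2, p.2.Nonempty := by
      intro p hp
      obtain ⟨q, hq, hq2⟩ := mark_snd_mem k d C p hp
      rw [hq2]; exact hC q hq
    constructor
    · rw [nem_full hR, (mark_tw k h0 hd).2]
      have : tw ([] : List (Atom n)) = 0 := rfl
      rw [this]
      have : max (0 - d) 0 = 0 := by
        apply max_eq_right; linarith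
      rw [this]; ring
    · exact ⟨[], (mark k d C).2, by simp, by simp, hR⟩
  | cons a U ih =>
    obtain ⟨w, A⟩ := a
    have hA : A = ∅ := hU (w, A) (by simp)
    subst hA
    have hw0 : 0 ≤ w := hw (w, (∅ : Finset (Fin n))) (by simp)
    have hUw : 0 ≤ tw U := tw_nonneg (fun p hp => hw p (by simp [hp]))
    have hCw : 0 ≤ tw C := tw_nonneg (fun p hp => hw p (by simp [hp]))
    have htw : tw (((w, (∅:Finset (Fin n))) :: U) ++ C) = w + (tw U + tw C) := by
      simp [tw, wsum_append]
    have htwU : tw ((w, (∅:Finset (Fin n))) :: U) = w + tw U := by simp [tw]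
    by_cases h : d ≤ w
    · have hmark : (mark k d (((w, (∅:Finset (Fin n))) :: U) ++ C)).2
          = (w - d, (∅:Finset (Fin n))) :: (U ++ C) := by
        simp [mark, h]
      rw [hmark]
      constructor
      · have : nem ((w - d, (∅:Finset (Fin n))) :: (U ++ C))
            = nem U + nem C := by
          simp [nem, wsum_append, ind]
        rw [this, nem_empty (fun p hp => hU p (by simp [hp])), nem_full hC]
        rw [htw, htwU]
        have : max (w + tw U - d) 0 = w + tw U - d := by
          apply max_eq_left; linarith
        rw [this]; ring
      · exact ⟨(w - d, ∅) :: U, C, by simp, by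
          intro p hp
          rcases List.mem_cons.mp hp with hp | hp
          · simp [hp]
          · exact hU p (by simp [hp]), hC⟩
    · have h1 : 0 ≤ d - w := by linarith [not_le.mp h]
      have h2 : d - w ≤ tw (U ++ C) := by
        rw [htw] at hd
        have : tw (U ++ C) = tw U + tw C := by simp [tw, wsum_append]
        rw [this]; linarith
      have hmark : (mark k d (((w, (∅:Finset (Fin n))) :: U) ++ C)).2
          = (mark k (d - w) (U ++ C)).2 := by
        simp [mark, h]
      rw [hmark]
      obtain ⟨ihn, ihs⟩ := ih (fun p hp => hU p (by simp [hp]))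
        (fun p hp => hw p (by simp [hp])) h1 h2
      refine ⟨?_, ihs⟩
      rw [ihn, htw, htwU]
      have : tw (U ++ C) = tw U + tw C := by simp [tw, wsum_append]
      rw [this]
      have : tw U - (d - w) = w + tw U - d := by ring
      rw [this]
      ring_nf


@[simp] lemma tw_append (L M : List (Atom n)) : tw (L ++ M) = tw L + tw M := wsum_append _ _ _
@[simp] lemma nem_append (L M : List (Atom n)) : nem (L ++ M) = nem L + nem M := wsum_append _ _ _
@[simp] lemma mss_append (i : Fin n) (L M : List (Atom n)) :
    mss i (L ++ M) = mss i L + mss i M := wsum_append _ _ _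
@[simp] lemma cov_append (K : ℕ) (L M : List (Atom n)) :
    cov K (L ++ M) = cov K L + cov K M := wsum_append _ _ _

noncomputable def yy (x : Fin n → ℝ) (i : ℕ) : ℝ := if h : i < n then x ⟨i, h⟩ else 0

noncomputable def SS (x : Fin n → ℝ) (K : ℕ) : ℝ := ∑ i ∈ Finset.range K, yy x i

lemma yy_nonneg {x : Fin n → ℝ} (hx : ∀ i, 0 ≤ x i ∧ x i ≤ 1) (i : ℕ) : 0 ≤ yy x i := by
  unfold yy; split
  · exact (hx _).1
  · exact le_refl _

lemma SS_nonneg {x : Fin n → ℝ} (hx : ∀ i, 0 ≤ x i ∧ x i ≤ 1) (K : ℕ) : 0 ≤ SS x K :=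
  Finset.sum_nonneg fun i _ => yy_nonneg hx i

lemma SS_mono {x : Fin n → ℝ} (hx : ∀ i, 0 ≤ x i ∧ x i ≤ 1) {K K' : ℕ} (h : K ≤ K') :
    SS x K ≤ SS x K' :=
  Finset.sum_le_sum_of_subset_of_nonneg (Finset.range_subset_range.mpr h)
    (fun i _ _ => yy_nonneg hx i)

lemma SS_succ (x : Fin n → ℝ) {j : ℕ} (hj : j < n) : SS x (j+1) = SS x j + x ⟨j, hj⟩ := by
  rw [SS, Finset.sum_range_succ, ← SS]
  congr 1
  simp [yy, hj]

noncomputable def build (x : Fin n → ℝ) : ℕ → List (Atom n)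
  | 0 => [(1, ∅)]
  | (j+1) =>
    if h : j < n then
      (mark ⟨j, h⟩ (x ⟨j, h⟩) (build x j)).2 ++ (mark ⟨j, h⟩ (x ⟨j, h⟩) (build x j)).1
    else build x j

def Inv (x : Fin n → ℝ) (j : ℕ) (L : List (Atom n)) : Prop :=
  (∀ p ∈ L, 0 ≤ p.1) ∧ tw L = 1 ∧
  (∀ i : Fin n, mss i L = if (i : ℕ) < j then x i else 0) ∧
  (∀ p ∈ L, ∀ i ∈ p.2, (i : ℕ) < j) ∧
  nem L = min 1 (SS x j) ∧
  (∀ K, 1 ≤ K → K ≤ j → cov K L = min 1 (SS x K)) ∧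
  ∃ U C, L = U ++ C ∧ (∀ p ∈ U, p.2 = ∅) ∧ (∀ p ∈ C, p.2.Nonempty)

lemma Inv_step {x : Fin n → ℝ} (hx : ∀ i, 0 ≤ x i ∧ x i ≤ 1) {j : ℕ} (hj : j < n)
    {L : List (Atom n)} (h : Inv x j L) :
    Inv x (j+1) ((mark ⟨j,hj⟩ (x ⟨j,hj⟩) L).2 ++ (mark ⟨j,hj⟩ (x ⟨j,hj⟩) L).1) := by
  obtain ⟨hw, htw, hmss, helt, hnem, hcov, U, C, hUC, hU, hC⟩ := h
  set k : Fin n := ⟨j, hj⟩ with hkdef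
  have hkj : (k : ℕ) = j := rfl
  set d : ℝ := x k with hddef
  have hd0 : 0 ≤ d := (hx k).1
  have hd1 : d ≤ tw L := by rw [htw]; exact (hx k).2
  set M := (mark k d L).1 with hMdef
  set R := (mark k d L).2 with hRdef
  have hMtw : tw M = d := (mark_tw k hd0 hd1).1
  have hRtw : tw R = tw L - d := (mark_tw k hd0 hd1).2
  have hMnn : ∀ p ∈ M, 0 ≤ p.1 := (mark_nonneg k hd0 hw hd1).1
  have hRnn : ∀ p ∈ R, 0 ≤ p.1 := (mark_nonneg k hd0 hw hd1).2
  -- element bound for the new list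
  have helt' : ∀ p ∈ R ++ M, ∀ i ∈ p.2, (i : ℕ) < j + 1 := by
    intro p hp i hi
    rcases List.mem_append.mp hp with hp | hp
    · obtain ⟨q, hq, hq2⟩ := mark_snd_mem k d L p hp
      rw [hq2] at hi
      exact Nat.lt_succ_of_lt (helt q hq i hi)
    · obtain ⟨q, hq, hq2⟩ := mark_fst_mem k d L p hp
      rw [hq2] at hi
      rcases Finset.mem_insert.mp hi with hi | hi
      · rw [hi, hkj]; exact Nat.lt_succ_self j
      · exact Nat.lt_succ_of_lt (helt q hq i hi)
  -- nem computation
  have hsplit := mark_split k hU hC (hUC ▸ hw) hd0 (hUC ▸ hd1)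
  rw [← hUC] at hsplit
  obtain ⟨hnemR, U', C', hRUC, hU', hC'⟩ := hsplit
  have htwU : tw U = 1 - min 1 (SS x j) := by
    have h1 : tw L = tw U + tw C := by rw [hUC]; simp
    have h2 : nem L = tw C := by
      rw [hUC, nem_append, nem_empty hU, nem_full hC]; ring
    rw [htw] at h1
    rw [hnem] at h2
    linarith
  have hnemM : nem M = d := by
    rw [nem_full (mark_fst_nonempty k d L), hMtw]
  have hSsucc : SS x (j+1) = SS x j + d := SS_succ x hj
  have hS0 : 0 ≤ SS x j := SS_nonneg hx j
  have hnem' : nem (R ++ M) = min 1 (SS x (j+1)) := by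
    rw [nem_append, hnemM, hnemR, htw, htwU, hSsucc]
    rcases le_total (SS x j) 1 with h1 | h1
    · rcases le_total (SS x j + d) 1 with h2 | h2
      · rw [min_eq_right h1, min_eq_right h2, max_eq_left (by linarith)]
        ring
      · rw [min_eq_right h1, min_eq_left h2, max_eq_right (by linarith)]
        ring
    · rw [min_eq_left h1, min_eq_left (by linarith)]
      rw [max_eq_right (by linarith)]
      ring
  refine ⟨?_, ?_, ?_, helt', hnem', ?_, ?_⟩
  · intro p hp
    rcases List.mem_append.mp hp with hp | hp
    · exact hRnn p hp
    · exact hMnn p hp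
  · rw [tw_append, hMtw, hRtw, htw]; ring
  · intro i
    by_cases hik : i = k
    · have h1 : mss k M = tw M := by
        apply wsum_congr
        intro p hp
        obtain ⟨q, _, hq2⟩ := mark_fst_mem k d L p hp
        rw [hq2]
        simp [ind]
      have h2 : mss k R = 0 := by
        have hz : ∀ p ∈ R, ind (k ∈ p.2) = (fun _ : Finset (Fin n) => (0:ℝ)) p.2 := by
          intro p hp
          obtain ⟨q, hq, hq2⟩ := mark_snd_mem k d L p hp
          have hknot : k ∉ p.2 := by
            rw [hq2]; intro hmem
            have := helt q hq k hmem
            omega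
          simp [ind, hknot]
        rw [mss, wsum_congr (h := fun _ => (0:ℝ)) hz, wsum_zero]
      rw [hik, mss_append, h2, h1, hMtw]
      have hcond : ((k:ℕ) < j + 1) := by omega
      rw [if_pos hcond, hddef]
      ring
    · have hvk : (i : ℕ) ≠ j := fun hh => hik (Fin.ext (by rw [hh, hkj]))
      have hg : ∀ A : Finset (Fin n), ind (i ∈ insert k A) = ind (i ∈ A) :=
        fun A => ind_congr (by simp [Finset.mem_insert, hik])
      have := mark_wsum k d L (g := fun A => ind (i ∈ A)) hg
      have heq : mss i (R ++ M) = mss i L := by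
        rw [mss_append]
        rw [mss, mss, mss]
        linarith [this]
      rw [heq, hmss i]
      have : ((i:ℕ) < j + 1) ↔ ((i:ℕ) < j) := by omega
      simp only [this]
  · intro K hK1 hK2
    rcases Nat.lt_or_ge K (j+1) with hKj | hKj
    · have hKj' : K ≤ j := Nat.lt_succ_iff.mp hKj
      have hg : ∀ A : Finset (Fin n),
          ind (∃ i ∈ insert k A, (i:ℕ) + 1 ≤ K) = ind (∃ i ∈ A, (i:ℕ) + 1 ≤ K) := by
        intro A
        apply ind_congr
        constructor
        · rintro ⟨i, hi, hile⟩
          rcases Finset.mem_insert.mp hi with hi | hi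
          · exfalso; rw [hi, hkj] at hile; omega
          · exact ⟨i, hi, hile⟩
        · rintro ⟨i, hi, hile⟩; exact ⟨i, Finset.mem_insert_of_mem hi, hile⟩
      have := mark_wsum k d L (g := fun A => ind (∃ i ∈ A, (i:ℕ) + 1 ≤ K)) hg
      have heq : cov K (R ++ M) = cov K L := by
        rw [cov_append, cov, cov, cov]
        linarith [this]
      rw [heq, hcov K hK1 hKj']
    · have hK : K = j + 1 := le_antisymm hK2 hKj
      subst hK
      have heq : cov (j+1) (R ++ M) = nem (R ++ M) := by
        apply wsum_congr
        intro p hp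
        apply ind_congr
        constructor
        · rintro ⟨i, hi, _⟩; exact ⟨i, hi⟩
        · rintro ⟨i, hi⟩
          exact ⟨i, hi, Nat.succ_le_of_lt (helt' p hp i hi)⟩
      rw [heq, hnem']
  · exact ⟨U', C' ++ M, by rw [hRdef, hRUC, List.append_assoc], hU', by
      intro p hp
      rcases List.mem_append.mp hp with hp | hp
      · exact hC' p hp
      · exact mark_fst_nonempty k d L p hp⟩

lemma Inv_build {x : Fin n → ℝ} (hx : ∀ i, 0 ≤ x i ∧ x i ≤ 1) :
    ∀ j, j ≤ n → Inv x j (build x j) := by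
  intro j
  induction j with
  | zero =>
    intro _
    refine ⟨?_, ?_, ?_, ?_, ?_, ?_, ?_⟩
    · intro p hp; simp only [build, List.mem_singleton] at hp; simp [hp]
    · simp [build, tw]
    · intro i; simp [build, mss, wsum, ind]
    · intro p hp; simp only [build, List.mem_singleton] at hp; simp [hp]
    · simp [build, nem, wsum, ind, SS]
    · intro K hK1 hK2; omega
    · exact ⟨[(1, ∅)], [], by simp [build], by simp, by simp⟩
  | succ j ih =>
    intro hj
    have hjn : j < n := hj
    have h := Inv_step hx hjn (ih (le_of_lt hjn))
    simpa [build, dif_pos hjn] using h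


lemma wsum_const_mul (c : ℝ) (g : Finset (Fin n) → ℝ) (L : List (Atom n)) :
    wsum (fun A => c * g A) L = c * wsum g L := by
  induction L with
  | nil => simp
  | cons p L ih => simp [wsum_cons, ih]; ring

end S11

section PhiFacts

open S11

variable {u : ℕ → ℝ} {u0 : ℝ}

lemma Phi_nonneg (hu0 : 0 < u0) (S : Finset ℕ) : 0 ≤ Phi 1 u u0 S := by
  apply Finset.le_max'
  apply Finset.mem_image.mpr
  refine ⟨∅, Finset.mem_filter.mpr ⟨Finset.empty_mem_powerset S, by simp⟩, by simp⟩

lemma Phi_ge (hu0 : 0 < u0) {a : ℕ} {S : Finset ℕ} (ha : a ∈ S) :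
    u a / (u a + u0) ≤ Phi 1 u u0 S := by
  apply Finset.le_max'
  apply Finset.mem_image.mpr
  refine ⟨{a}, Finset.mem_filter.mpr ⟨?_, by simp⟩, by simp⟩
  exact Finset.mem_powerset.mpr (Finset.singleton_subset_iff.mpr ha)

lemma Phi_le (hu0 : 0 < u0) {S : Finset ℕ} {B : ℝ} (hB : 0 ≤ B)
    (h : ∀ a ∈ S, u a / (u a + u0) ≤ B) : Phi 1 u u0 S ≤ B := by
  apply Finset.max'_le
  intro v hv
  obtain ⟨S', hS', rfl⟩ := Finset.mem_image.mp hv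
  obtain ⟨hsub, hcard⟩ := Finset.mem_filter.mp hS'
  rcases S'.eq_empty_or_nonempty with he | ⟨a, ha⟩
  · subst he; simpa using hB
  · have : S' = {a} := by
      apply Finset.eq_singleton_iff_unique_mem.mpr
      exact ⟨ha, fun b hb => Finset.card_le_one.mp hcard b hb a ha⟩
    subst this
    simpa using h a (Finset.mem_powerset.mp hsub (by simp))

lemma frac_mono (hu0 : 0 < u0) {a b : ℝ} (ha : 0 ≤ a) (hab : a ≤ b) :
    a / (a + u0) ≤ b / (b + u0) := by
  have h1 : 0 < a + u0 := by linarith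
  have h2 : 0 < b + u0 := by linarith
  rw [div_le_div_iff₀ h1 h2]
  nlinarith

lemma frac_nonneg (hu0 : 0 < u0) {a : ℝ} (ha : 0 ≤ a) : 0 ≤ a / (a + u0) :=
  div_nonneg ha (by linarith)

end PhiFacts

namespace S11

lemma telescope (g : ℕ → ℝ) : ∀ N m, m ≤ N + 1 →
    ∑ K ∈ Finset.Icc m N, (g K - g (K + 1)) = g m - g (N + 1) := by
  intro N
  induction N with
  | zero =>
    intro m hm
    interval_cases m
    · simp
    · simp
  | succ N ih =>
    intro m hm
    rcases Nat.lt_or_ge m (N + 2) with h | h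
    · have hm' : m ≤ N + 1 := by omega
      rw [Finset.sum_Icc_succ_top hm', ih m hm']
      ring
    · have : m = N + 2 := by omega
      subst this
      rw [Finset.Icc_eq_empty (by omega)]
      simp

lemma sumSK (g y : ℕ → ℝ) : ∀ L : ℕ,
    ∑ K ∈ Finset.Icc 1 L, (g K - g (K + 1)) * (∑ i ∈ Finset.range K, y i)
      = ∑ i ∈ Finset.range L, (g (i + 1) - g (L + 1)) * y i := by
  intro L
  induction L with
  | zero => simp
  | succ L ih =>
    rw [Finset.sum_Icc_succ_top (by omega), ih, Finset.sum_range_succ (n := L)]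
    have hsplit : ∀ i, (g (i+1) - g (L+2)) * y i
        = (g (i+1) - g (L+1)) * y i + (g (L+1) - g (L+2)) * y i := by
      intro i; ring
    rw [Finset.sum_range_succ (f := fun i => (g (i+1) - g (L+1+1)) * y i)]
    rw [Finset.sum_congr rfl (fun i _ => hsplit i), Finset.sum_add_distrib,
      ← Finset.mul_sum]
    ring

end S11

namespace S11

lemma atom_bound {n : ℕ} {u : ℕ → ℝ} {u0 : ℝ} (hu0 : 0 < u0) (hn1 : u (n + 1) = 0)
    (A : Finset (Fin n)) :
    ∑ K ∈ Finset.Icc 1 n,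
        (u K / (u K + u0) - u (K+1) / (u (K+1) + u0)) * ind (∃ i ∈ A, (i : ℕ) + 1 ≤ K)
      ≤ Phi 1 u u0 (A.image fun i : Fin n => (i : ℕ) + 1) := by
  rcases A.eq_empty_or_nonempty with he | hne
  · subst he
    have : ∀ K ∈ Finset.Icc 1 n,
        (u K / (u K + u0) - u (K+1) / (u (K+1) + u0))
          * ind (∃ i ∈ (∅ : Finset (Fin n)), (i : ℕ) + 1 ≤ K) = 0 := by
      intro K _
      simp [ind]
    rw [Finset.sum_congr rfl this]
    simpa using Phi_nonneg hu0 _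
  · set i0 := A.min' hne with hi0
    set m := (i0 : ℕ) + 1 with hm
    have hiff : ∀ K, (∃ i ∈ A, (i : ℕ) + 1 ≤ K) ↔ m ≤ K := by
      intro K
      constructor
      · rintro ⟨i, hi, hle⟩
        have := A.min'_le i hi
        have : (i0 : ℕ) ≤ (i : ℕ) := this
        omega
      · intro h
        exact ⟨i0, A.min'_mem hne, h⟩
    have hstep : ∀ K ∈ Finset.Icc 1 n,
        (u K / (u K + u0) - u (K+1) / (u (K+1) + u0)) * ind (∃ i ∈ A, (i : ℕ) + 1 ≤ K)
          = if m ≤ K then (u K / (u K + u0) - u (K+1) / (u (K+1) + u0)) else 0 := by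
      intro K _
      rw [ind_congr (hiff K)]
      unfold ind
      split <;> ring
    rw [Finset.sum_congr rfl hstep, ← Finset.sum_filter]
    have hfilter : (Finset.Icc 1 n).filter (fun K => m ≤ K) = Finset.Icc m n := by
      ext K
      simp only [Finset.mem_filter, Finset.mem_Icc]
      omega
    rw [hfilter]
    have hmn : m ≤ n + 1 := by
      have := i0.isLt
      omega
    rw [telescope (fun K => u K / (u K + u0)) n m hmn]
    have h0 : u (n+1) / (u (n+1) + u0) = 0 := by rw [hn1]; simp
    rw [h0, sub_zero]
    apply Phi_ge hu0
    exact Finset.mem_image.mpr ⟨i0, A.min'_mem hne, rfl⟩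

end S11

lemma convex_ineq {m : ℕ} (c : Fin m → ℝ) (C : ℝ) {w1 w2 a b : ℝ} {x1 x2 : Fin m → ℝ}
    (h1 : w1 ≤ C + ∑ j, c j * x1 j) (h2 : w2 ≤ C + ∑ j, c j * x2 j)
    (ha : 0 ≤ a) (hb : 0 ≤ b) (hab : a + b = 1) :
    a * w1 + b * w2 ≤ C + ∑ j, c j * (a * x1 j + b * x2 j) := by
  have e : ∑ j, c j * (a * x1 j + b * x2 j)
      = a * (∑ j, c j * x1 j) + b * (∑ j, c j * x2 j) := by
    rw [Finset.mul_sum, Finset.mul_sum, ← Finset.sum_add_distrib]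
    exact Finset.sum_congr rfl (fun j _ => by ring)
  rw [e]
  have ha1 := mul_le_mul_of_nonneg_left h1 ha
  have hb1 := mul_le_mul_of_nonneg_left h2 hb
  rw [mul_add] at ha1 hb1
  have hC : a * C + b * C = C := by rw [← add_mul, hab, one_mul]
  linarith


set_option maxHeartbeats 1000000 in
open S11 in
/-- for `γ = 1`, the convex hull of
`X = {(w,x) ∈ ℝ × {0,1}ⁿ : w ≤ Φ(Sˣ)}` is described by the `n` inequalities
`w ≤ u_{ℓ+1}/(u_{ℓ+1}+u₀) + ∑_j (u_j/(u_j+u₀) − u_{ℓ+1}/(u_{ℓ+1}+u₀))⁺ x_j`, `ℓ ∈ [n]`,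
together with the bounds `0 ≤ x ≤ 1`. The coordinate `x j` (for `j : Fin n`) corresponds
to facility `(j:ℕ)+1 ∈ [n]`. -/
theorem stmt_11 (n : ℕ) (hn : 1 ≤ n) (u : ℕ → ℝ) (u0 : ℝ) (hu0 : 0 < u0)
    (hnn : ∀ j ∈ Finset.Icc 1 n, 0 ≤ u j) (hn1 : u (n + 1) = 0)
    (hmono : ∀ j ∈ Finset.Icc 1 (n+1), ∀ k ∈ Finset.Icc 1 (n+1), j ≤ k → u k ≤ u j)
    (X P : Set (ℝ × (Fin n → ℝ)))
    (hX : X = {p | (∀ j, p.2 j = 0 ∨ p.2 j = 1) ∧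
      p.1 ≤ Phi 1 u u0 ((Finset.univ.filter fun j : Fin n => p.2 j = 1).image
        fun j : Fin n => (j : ℕ) + 1)})
    (hP : P = {p | (∀ j, 0 ≤ p.2 j ∧ p.2 j ≤ 1) ∧ ∀ ℓ ∈ Finset.Icc 1 n,
      p.1 ≤ u (ℓ+1) / (u (ℓ+1) + u0) +
        ∑ j : Fin n,
          max (u ((j:ℕ)+1) / (u ((j:ℕ)+1) + u0) - u (ℓ+1) / (u (ℓ+1) + u0)) 0 * p.2 j}) :
    convexHull ℝ X = P := by
  subst hX; subst hP
  have unn : ∀ b, 1 ≤ b → b ≤ n + 1 → 0 ≤ u b := by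
    intro b h1 h2
    rcases Nat.lt_or_ge b (n + 1) with h | h
    · exact hnn b (Finset.mem_Icc.mpr ⟨h1, by omega⟩)
    · have hb : b = n + 1 := by omega
      rw [hb, hn1]
  have fnn : ∀ b, 1 ≤ b → b ≤ n + 1 → 0 ≤ u b / (u b + u0) :=
    fun b h1 h2 => frac_nonneg hu0 (unn b h1 h2)
  have fmono : ∀ a b, 1 ≤ a → a ≤ b → b ≤ n + 1 → u b / (u b + u0) ≤ u a / (u a + u0) := by
    intro a b h1 h2 h3
    exact frac_mono hu0 (unn b (by omega) h3)
      (hmono a (Finset.mem_Icc.mpr ⟨h1, by omega⟩) b (Finset.mem_Icc.mpr ⟨by omega, h3⟩) h2)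
  apply Set.Subset.antisymm
  · -- `convexHull X ⊆ P`
    apply convexHull_min
    · rintro ⟨w, x⟩ ⟨h01, hle⟩
      refine ⟨fun j => ?_, fun ℓ hℓ => ?_⟩
      · rcases h01 j with h | h <;> rw [h] <;> norm_num
      · obtain ⟨hl1, hln⟩ := Finset.mem_Icc.mp hℓ
        have hx0 : ∀ j : Fin n, x j = 0 ∨ x j = 1 := h01
        have hxnn : ∀ j : Fin n, (0:ℝ) ≤ x j := by
          intro j; rcases hx0 j with h | h <;> rw [h] <;> norm_num
        have htermnn : ∀ j : Fin n, 0 ≤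
            max (u ((j:ℕ)+1) / (u ((j:ℕ)+1) + u0) - u (ℓ+1) / (u (ℓ+1) + u0)) 0 * x j :=
          fun j => mul_nonneg (le_max_right _ _) (hxnn j)
        have hB : (0:ℝ) ≤ u (ℓ+1) / (u (ℓ+1) + u0) +
            ∑ j : Fin n,
              max (u ((j:ℕ)+1) / (u ((j:ℕ)+1) + u0) - u (ℓ+1) / (u (ℓ+1) + u0)) 0 * x j := by
          have h1 := fnn (ℓ+1) (by omega) (by omega)
          have h2 := Finset.sum_nonneg (fun j (_ : j ∈ Finset.univ) => htermnn j)
          linarith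
        refine le_trans hle (Phi_le hu0 hB ?_)
        intro a ha
        obtain ⟨j, hj, rfl⟩ := Finset.mem_image.mp ha
        have hj1 : x j = 1 := (Finset.mem_filter.mp hj).2
        have hsingle := Finset.single_le_sum (fun j' (_ : j' ∈ Finset.univ) => htermnn j')
          (Finset.mem_univ j)
        have hmax : u ((j:ℕ)+1) / (u ((j:ℕ)+1) + u0) - u (ℓ+1) / (u (ℓ+1) + u0)
            ≤ max (u ((j:ℕ)+1) / (u ((j:ℕ)+1) + u0) - u (ℓ+1) / (u (ℓ+1) + u0)) 0 :=
          le_max_left _ _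
        rw [hj1, mul_one] at hsingle
        linarith
    · -- convexity of the polyhedron
      rintro ⟨w1, x1⟩ ⟨hb1, hi1⟩ ⟨w2, x2⟩ ⟨hb2, hi2⟩ a b ha hb hab
      refine ⟨fun j => ?_, fun ℓ hℓ => ?_⟩
      · show 0 ≤ a * x1 j + b * x2 j ∧ a * x1 j + b * x2 j ≤ 1
        constructor
        · exact add_nonneg (mul_nonneg ha (hb1 j).1) (mul_nonneg hb (hb2 j).1)
        · calc a * x1 j + b * x2 j ≤ a * 1 + b * 1 :=
                add_le_add (mul_le_mul_of_nonneg_left (hb1 j).2 ha)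
                  (mul_le_mul_of_nonneg_left (hb2 j).2 hb)
          _ = 1 := by rw [mul_one, mul_one, hab]
      · exact convex_ineq
          (fun j : Fin n =>
            max (u ((j:ℕ)+1) / (u ((j:ℕ)+1) + u0) - u (ℓ+1) / (u (ℓ+1) + u0)) 0)
          (u (ℓ+1) / (u (ℓ+1) + u0)) (hi1 ℓ hℓ) (hi2 ℓ hℓ) ha hb hab
  · -- `P ⊆ convexHull X`
    rintro ⟨w, x⟩ ⟨hx', hineq⟩
    obtain ⟨hwt, htw, hmss, helt, hnemL, hcovL, -⟩ := Inv_build (x := x) hx' n (le_refl n)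
    set L := build x n with hLdef
    set ℓ := Nat.findGreatest (fun K => SS x K ≤ 1) n with hldef
    have hS1 : SS x 1 ≤ 1 := by
      rw [SS, Finset.sum_range_one]
      unfold yy
      rw [dif_pos (by omega : (0:ℕ) < n)]
      exact (hx' _).2
    have hl1 : 1 ≤ ℓ := by
      rw [hldef]; exact Nat.le_findGreatest (P := fun K => SS x K ≤ 1) hn hS1
    have hln : ℓ ≤ n := by
      rw [hldef]; exact Nat.findGreatest_le (P := fun K => SS x K ≤ 1) n
    have hSl : SS x ℓ ≤ 1 := by
      rw [hldef]; exact Nat.findGreatest_spec (P := fun K => SS x K ≤ 1) hn hS1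
    have hgt : ∀ K, ℓ < K → K ≤ n → 1 < SS x K := by
      intro K hK1 hK2
      rw [hldef] at hK1
      exact not_le.mp (Nat.findGreatest_is_greatest (P := fun K => SS x K ≤ 1) hK1 hK2)
    have key1 : ∑ K ∈ Finset.Icc 1 n,
          (u K / (u K + u0) - u (K+1) / (u (K+1) + u0)) * min 1 (SS x K)
        = u (ℓ+1) / (u (ℓ+1) + u0) + ∑ i ∈ Finset.range n,
            max (u (i+1) / (u (i+1) + u0) - u (ℓ+1) / (u (ℓ+1) + u0)) 0 * yy x i := by
      have hIcc : Finset.Icc 1 n = Finset.Ioc 0 n := by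
        ext K; simp only [Finset.mem_Icc, Finset.mem_Ioc]; omega
      rw [hIcc, ← Finset.sum_Ioc_consecutive _ (Nat.zero_le ℓ) hln]
      have hA : ∑ K ∈ Finset.Ioc 0 ℓ,
            (u K / (u K + u0) - u (K+1) / (u (K+1) + u0)) * min 1 (SS x K)
          = ∑ i ∈ Finset.range ℓ,
            (u (i+1) / (u (i+1) + u0) - u (ℓ+1) / (u (ℓ+1) + u0)) * yy x i := by
        have hc : ∀ K ∈ Finset.Ioc 0 ℓ,
            (u K / (u K + u0) - u (K+1) / (u (K+1) + u0)) * min 1 (SS x K)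
              = (u K / (u K + u0) - u (K+1) / (u (K+1) + u0)) * SS x K := by
          intro K hK
          obtain ⟨hK0, hKl⟩ := Finset.mem_Ioc.mp hK
          rw [min_eq_right (le_trans (SS_mono hx' hKl) hSl)]
        rw [Finset.sum_congr rfl hc]
        have hIoc : Finset.Ioc 0 ℓ = Finset.Icc 1 ℓ := by
          ext K; simp only [Finset.mem_Icc, Finset.mem_Ioc]; omega
        rw [hIoc]
        exact sumSK (fun K => u K / (u K + u0)) (yy x) ℓ
      have hB : ∑ K ∈ Finset.Ioc ℓ n,
            (u K / (u K + u0) - u (K+1) / (u (K+1) + u0)) * min 1 (SS x K)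
          = u (ℓ+1) / (u (ℓ+1) + u0) := by
        have hc : ∀ K ∈ Finset.Ioc ℓ n,
            (u K / (u K + u0) - u (K+1) / (u (K+1) + u0)) * min 1 (SS x K)
              = (u K / (u K + u0) - u (K+1) / (u (K+1) + u0)) := by
          intro K hK
          obtain ⟨hK0, hKn⟩ := Finset.mem_Ioc.mp hK
          rw [min_eq_left (le_of_lt (hgt K hK0 hKn)), mul_one]
        rw [Finset.sum_congr rfl hc]
        have hIoc : Finset.Ioc ℓ n = Finset.Icc (ℓ+1) n := by
          ext K; simp only [Finset.mem_Icc, Finset.mem_Ioc]; omega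
        rw [hIoc, telescope (fun K => u K / (u K + u0)) n (ℓ+1) (by omega)]
        have h0 : u (n+1) / (u (n+1) + u0) = 0 := by rw [hn1]; simp
        rw [h0, sub_zero]
      have hC : ∑ i ∈ Finset.range n,
            max (u (i+1) / (u (i+1) + u0) - u (ℓ+1) / (u (ℓ+1) + u0)) 0 * yy x i
          = ∑ i ∈ Finset.range ℓ,
            (u (i+1) / (u (i+1) + u0) - u (ℓ+1) / (u (ℓ+1) + u0)) * yy x i := by
        rw [Finset.range_eq_Ico, ← Finset.sum_Ico_consecutive _ (Nat.zero_le ℓ) hln]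
        have hfirst : ∀ i ∈ Finset.Ico 0 ℓ,
            max (u (i+1) / (u (i+1) + u0) - u (ℓ+1) / (u (ℓ+1) + u0)) 0 * yy x i
              = (u (i+1) / (u (i+1) + u0) - u (ℓ+1) / (u (ℓ+1) + u0)) * yy x i := by
          intro i hi
          obtain ⟨-, h2⟩ := Finset.mem_Ico.mp hi
          rw [max_eq_left (sub_nonneg.mpr (fmono (i+1) (ℓ+1) (by omega) (by omega) (by omega)))]
        have hsecond : ∀ i ∈ Finset.Ico ℓ n,
            max (u (i+1) / (u (i+1) + u0) - u (ℓ+1) / (u (ℓ+1) + u0)) 0 * yy x i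
              = 0 := by
          intro i hi
          obtain ⟨h1, h2⟩ := Finset.mem_Ico.mp hi
          rw [max_eq_right (sub_nonpos.mpr (fmono (ℓ+1) (i+1) (by omega) (by omega) (by omega))),
            zero_mul]
        rw [Finset.sum_congr rfl hfirst, Finset.sum_congr rfl hsecond,
          Finset.sum_const_zero, add_zero, ← Finset.range_eq_Ico]
      rw [hA, hB, hC]
      ring
    set PhiV : Finset (Fin n) → ℝ :=
      fun A => Phi 1 u u0 (A.image fun i : Fin n => (i:ℕ)+1) with hPhiV
    have key2 : ∑ K ∈ Finset.Icc 1 n,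
          (u K / (u K + u0) - u (K+1) / (u (K+1) + u0)) * min 1 (SS x K)
        ≤ wsum PhiV L := by
      have e1 : ∀ K ∈ Finset.Icc 1 n,
          (u K / (u K + u0) - u (K+1) / (u (K+1) + u0)) * min 1 (SS x K)
            = (u K / (u K + u0) - u (K+1) / (u (K+1) + u0)) * cov K L := by
        intro K hK
        obtain ⟨h1, h2⟩ := Finset.mem_Icc.mp hK
        rw [hcovL K h1 h2]
      rw [Finset.sum_congr rfl e1]
      have e2 : ∀ K ∈ Finset.Icc 1 n,
          (u K / (u K + u0) - u (K+1) / (u (K+1) + u0)) * cov K L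
            = wsum (fun A => (u K / (u K + u0) - u (K+1) / (u (K+1) + u0))
                * ind (∃ i ∈ A, (i : ℕ) + 1 ≤ K)) L :=
        fun K _ => (wsum_const_mul _ _ _).symm
      rw [Finset.sum_congr rfl e2, ← wsum_sum]
      exact wsum_le hwt (fun p _ => atom_bound hu0 hn1 p.2)
    set V := wsum PhiV L with hVdef
    have hwV : w ≤ V := by
      have h := hineq ℓ (Finset.mem_Icc.mpr ⟨hl1, hln⟩)
      have hbr : ∑ j : Fin n,
            max (u ((j:ℕ)+1) / (u ((j:ℕ)+1) + u0) - u (ℓ+1) / (u (ℓ+1) + u0)) 0 * x j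
          = ∑ i ∈ Finset.range n,
            max (u (i+1) / (u (i+1) + u0) - u (ℓ+1) / (u (ℓ+1) + u0)) 0 * yy x i := by
        rw [← Fin.sum_univ_eq_sum_range
          (fun i => max (u (i+1) / (u (i+1) + u0) - u (ℓ+1) / (u (ℓ+1) + u0)) 0 * yy x i) n]
        apply Finset.sum_congr rfl
        intro j _
        congr 1
        unfold yy
        rw [dif_pos j.isLt]
      rw [hbr] at h
      linarith [key1 ▸ key2]
    -- the convex combination
    have hWnn : ∀ i : Fin L.length, 0 ≤ (L.get i).1 := fun i => hwt _ (List.get_mem L i)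
    have hWsum : ∑ i : Fin L.length, (L.get i).1 = 1 := by
      have h1 : ∑ i : Fin L.length, (L.get i).1 = (L.map Prod.fst).sum := by
        simp only [List.get_eq_getElem]
        exact Fin.sum_univ_fun_getElem L Prod.fst
      have h2 : (L.map Prod.fst).sum = tw L := by
        simp [tw, wsum]
      rw [h1, h2, htw]
    set z : Fin L.length → ℝ × (Fin n → ℝ) := fun i =>
      (PhiV (L.get i).2 - (V - w), fun j => if j ∈ (L.get i).2 then (1:ℝ) else 0) with hz
    have hzX : ∀ i : Fin L.length, z i ∈ {p : ℝ × (Fin n → ℝ) |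
        (∀ j, p.2 j = 0 ∨ p.2 j = 1) ∧
        p.1 ≤ Phi 1 u u0 ((Finset.univ.filter fun j : Fin n => p.2 j = 1).image
          fun j : Fin n => (j : ℕ) + 1)} := by
      intro i
      refine ⟨fun j => ?_, ?_⟩
      · by_cases hj : j ∈ (L.get i).2 <;> simp [hz, hj] <;> tauto
      · have hfil : (Finset.univ.filter fun j : Fin n => (z i).2 j = 1) = (L.get i).2 := by
          ext j
          by_cases hj : j ∈ (L.get i).2 <;> simp [hz, hj]
        show (z i).1 ≤ _
        rw [hfil]
        show PhiV (L.get i).2 - (V - w) ≤ PhiV (L.get i).2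
        linarith
    have hmem := Finset.centerMass_mem_convexHull (t := Finset.univ)
      (w := fun i : Fin L.length => (L.get i).1) (fun i _ => hWnn i)
      (by rw [hWsum]; norm_num) (z := z) (fun i _ => hzX i)
    rw [Finset.centerMass_eq_of_sum_1 _ _ hWsum] at hmem
    have hzsum : (∑ i : Fin L.length, (L.get i).1 • z i) = ((w, x) : ℝ × (Fin n → ℝ)) := by
      have eV : ∑ i : Fin L.length, (L.get i).1 * PhiV (L.get i).2 = V := by
        rw [hVdef]
        simp only [List.get_eq_getElem]
        exact Fin.sum_univ_fun_getElem L (fun p => p.1 * PhiV p.2)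
      apply Prod.ext
      · rw [Prod.fst_sum]
        have e : ∀ i : Fin L.length, ((L.get i).1 • z i).1
            = (L.get i).1 * PhiV (L.get i).2 - (L.get i).1 * (V - w) := by
          intro i
          show (L.get i).1 * (PhiV (L.get i).2 - (V - w)) = _
          ring
        rw [Finset.sum_congr rfl (fun i _ => e i), Finset.sum_sub_distrib, ← Finset.sum_mul,
          hWsum, eV]
        show V - 1 * (V - w) = w
        ring
      · rw [Prod.snd_sum]
        funext j
        rw [Finset.sum_apply]
        have e : ∀ i : Fin L.length, ((L.get i).1 • z i).2 j
            = (L.get i).1 * ind (j ∈ (L.get i).2) := by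
          intro i
          show (L.get i).1 * (if j ∈ (L.get i).2 then (1:ℝ) else 0) = _
          by_cases hj : j ∈ (L.get i).2 <;> simp [ind, hj]
        rw [Finset.sum_congr rfl (fun i _ => e i)]
        have emss : ∑ i : Fin L.length, (L.get i).1 * ind (j ∈ (L.get i).2) = mss j L := by
          simp only [List.get_eq_getElem]
          exact Fin.sum_univ_fun_getElem L (fun p => p.1 * ind (j ∈ p.2))
        rw [emss, hmss j, if_pos j.isLt]
    rw [hzsum] at hmem
    exact hmem
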